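/- Let G^c be a connected vertex-coloured graph on n vertices with c colours and minimum degree δ ≥ 9. Then either γᵗ(G^c) = c, or γᵗ(G^c) < (δ·(n − c + 1))/(3δ − 1) + c − 1. -/

import Mathlib

/-! Auxiliary greedy-covering machinery. -/

def T : ℕ → ℕ → ℕ
  | 0, _ => 0
  | m+1, u => if u = 0 then 0 else
      min u (if m+1 ≤ 10 then 1 else 1 + T m (u - (10*u + m) / (m+1)))

lemma T_zero (m : ℕ) : T m 0 = 0 := by cases m <;> simp [T]

lemma T_le_self : ∀ m u, T m u ≤ u := by
  intro m
  induction m with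
  | zero => intro u; simp [T]
  | succ m ih =>
    intro u
    by_cases hu : u = 0
    · simp [T, hu]
    · simp only [T, if_neg hu]
      exact min_le_left _ _

lemma div_le_u (m u : ℕ) (hm : 10 ≤ m) (hu : u ≠ 0) : (10*u + m) / (m+1) ≤ u := by
  have h : (10*u + m) / (m+1) < u + 1 := by
    rw [Nat.div_lt_iff_lt_mul (by omega)]
    have : 10 * u ≤ m * u := Nat.mul_le_mul_right u hm
    nlinarith
  omega

lemma step_mono (m : ℕ) (hm : 10 ≤ m) {u v : ℕ} (huv : u ≤ v) :
    u - (10*u + m) / (m+1) ≤ v - (10*v + m) / (m+1) := by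
  induction v with
  | zero =>
    have hu0 : u = 0 := by omega
    subst hu0; exact le_rfl
  | succ v ih =>
    rcases Nat.lt_or_ge u (v+1) with h | h
    · have hle : u ≤ v := by omega
      have h1 : (10*(v+1)+m)/(m+1) ≤ (10*v+m)/(m+1) + 1 := by
        have : (10*v+m)/(m+1) + 1 = (10*v+m+(m+1))/(m+1) := by
          rw [Nat.add_div_right _ (by omega)]
        rw [this]
        exact Nat.div_le_div_right (by omega)
      by_cases hv : v = 0
      · subst hv
        simp only [Nat.le_zero] at hle; subst hle
        simp
      · have h2 : (10*v+m)/(m+1) ≤ v := div_le_u m v hm hv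
        have := ih hle
        omega
    · have heq : u = v + 1 := by omega
      subst heq; exact le_rfl

lemma T_mono : ∀ m {u v}, u ≤ v → T m u ≤ T m v := by
  intro m
  induction m with
  | zero => intro u v _; simp [T]
  | succ m ih =>
    intro u v huv
    by_cases hu : u = 0
    · simp [hu, T_zero]
    · have hv : v ≠ 0 := by omega
      simp only [T, if_neg hu, if_neg hv]
      by_cases hm : m + 1 ≤ 10
      · simp only [if_pos hm]
        exact min_le_min huv le_rfl
      · simp only [if_neg hm]
        refine min_le_min huv (Nat.add_le_add_left (ih ?_) 1)
        exact step_mono m (by omega) huv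

lemma T_iter : ∀ (t m u : ℕ) (q : ℚ), (u:ℚ) ≤ q → t + 10 < m →
    (T m u : ℚ) ≤ t + q * ∏ k ∈ Finset.range t, (((m:ℚ) - k - 10)/((m:ℚ) - k)) := by
  intro t
  induction t with
  | zero =>
    intro m u q hq _
    simpa using le_trans (by exact_mod_cast T_le_self m u) hq
  | succ t ih =>
    intro m u q hq hm
    have hq0 : 0 ≤ q := le_trans (by positivity) hq
    have hprodnn : 0 ≤ ∏ k ∈ Finset.range (t+1), (((m:ℚ) - k - 10)/((m:ℚ) - k)) := by
      apply Finset.prod_nonneg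
      intro k hk
      have hk' : k ≤ t := by simpa [Nat.lt_succ_iff] using hk
      have h1 : (k:ℚ) + 10 < m := by exact_mod_cast (show k + 10 < m by omega)
      apply div_nonneg <;> linarith
    obtain ⟨m', rfl⟩ : ∃ m', m = m' + 1 := ⟨m - 1, by omega⟩
    by_cases hu : u = 0
    · subst hu
      simp only [T_zero, Nat.cast_zero]
      positivity
    · have hm10 : ¬ (m' + 1 ≤ 10) := by omega
      have hdu : (10*u + m') / (m'+1) ≤ u := by
        have h : (10*u + m') / (m'+1) < u + 1 := by
          rw [Nat.div_lt_iff_lt_mul (by omega)]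
          have : 10 * u ≤ m' * u := Nat.mul_le_mul_right u (by omega)
          nlinarith
        omega
      have hdl : 10 * u ≤ (m'+1) * ((10*u + m') / (m'+1)) := by
        have h1 := Nat.div_add_mod (10*u + m') (m'+1)
        have h2 := Nat.mod_lt (10*u + m') (show 0 < m'+1 by omega)
        omega
      set u₁ := u - (10*u + m') / (m'+1) with hu₁
      set d := (10*u + m') / (m'+1) with hd
      have hT : (T (m'+1) u : ℚ) ≤ 1 + (T m' u₁ : ℚ) := by
        have h : T (m'+1) u ≤ 1 + T m' u₁ := by
          simp only [T, if_neg hu, if_neg hm10]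
          exact min_le_right _ _
        exact_mod_cast h
      have hM0 : (0:ℚ) < (m':ℚ) + 1 := by positivity
      have hM11 : (11:ℚ) ≤ (m':ℚ) + 1 := by
        exact_mod_cast (show (11:ℕ) ≤ m' + 1 by omega)
      have hfrac : (0:ℚ) ≤ ((m':ℚ) + 1 - 10) / ((m':ℚ) + 1) := by
        apply div_nonneg <;> linarith
      have hu₁q : (u₁ : ℚ) ≤ q * (((m':ℚ) + 1 - 10) / ((m':ℚ) + 1)) := by
        have hcast : (u₁ : ℚ) = (u:ℚ) - (d:ℚ) := by
          rw [hu₁]; push_cast [hdu]; ring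
        have hdlq : 10 * (u:ℚ) ≤ ((m':ℚ) + 1) * d := by
          have := (Nat.cast_le (α := ℚ)).mpr hdl
          push_cast at this
          linarith
        have h1 : (u₁:ℚ) ≤ (u:ℚ) * (((m':ℚ) + 1 - 10) / ((m':ℚ) + 1)) := by
          rw [hcast]
          have hdq : 10*(u:ℚ)/((m':ℚ)+1) ≤ (d:ℚ) := by
            rw [div_le_iff₀ hM0]; nlinarith [hdlq]
          have he : (u:ℚ) * (((m':ℚ) + 1 - 10) / ((m':ℚ) + 1))
              = (u:ℚ) - 10*(u:ℚ)/((m':ℚ)+1) := by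
            field_simp
          rw [he]; linarith
        exact le_trans h1 (mul_le_mul_of_nonneg_right hq hfrac)
      have hstep : t + 10 < m' := by omega
      have hIH := ih m' u₁ (q * (((m':ℚ) + 1 - 10) / ((m':ℚ) + 1))) hu₁q hstep
      have hprod : (q * (((m':ℚ) + 1 - 10) / ((m':ℚ) + 1))) * ∏ k ∈ Finset.range t, (((m':ℚ)) - k - 10)/(((m':ℚ)) - k)
          = q * ∏ k ∈ Finset.range (t+1), ((((m'+1:ℕ)):ℚ) - k - 10)/((((m'+1:ℕ)):ℚ) - k) := by
        rw [Finset.prod_range_succ']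
        have h0 : ((((m'+1:ℕ)):ℚ) - ((0:ℕ):ℚ) - 10)/((((m'+1:ℕ)):ℚ) - ((0:ℕ):ℚ))
            = ((m':ℚ) + 1 - 10) / ((m':ℚ) + 1) := by
          push_cast; norm_num
        have hsucc : ∀ k ∈ Finset.range t,
            ((((m'+1:ℕ)):ℚ) - ((k+1:ℕ):ℚ) - 10)/((((m'+1:ℕ)):ℚ) - ((k+1:ℕ):ℚ))
            = (((m':ℚ)) - k - 10)/(((m':ℚ)) - k) := by
          intro k _
          push_cast
          ring_nf
        rw [Finset.prod_congr rfl hsucc, h0]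
        ring
      calc (T (m'+1) u : ℚ) ≤ 1 + (T m' u₁ : ℚ) := hT
        _ ≤ 1 + ((t:ℚ) + (q * (((m':ℚ) + 1 - 10) / ((m':ℚ) + 1))) * ∏ k ∈ Finset.range t, (((m':ℚ)) - k - 10)/(((m':ℚ)) - k)) := by
            linarith
        _ = ((t+1 : ℕ):ℚ) + q * ∏ k ∈ Finset.range (t+1), ((((m'+1:ℕ)):ℚ) - k - 10)/((((m'+1:ℕ)):ℚ) - k) := by
            rw [hprod]; push_cast; ring

lemma prod_le : ∀ (t m : ℕ), t + 10 < m →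
    ∏ k ∈ Finset.range t, (((m:ℚ) - k - 10)/((m:ℚ) - k)) ≤ (((m:ℚ) - t)/(m:ℚ))^10 := by
  intro t
  induction t with
  | zero =>
    intro m h
    have hm0 : (0:ℚ) < m := by exact_mod_cast (show 0 < m by omega)
    push_cast
    simp [div_self hm0.ne']
  | succ t ih =>
    intro m hm
    have hmq : (11:ℚ) + t < m := by exact_mod_cast (show 11 + t < m by omega)
    have hm0 : (0:ℚ) < m := by linarith [Nat.cast_nonneg (α := ℚ) t]
    have hx : (0:ℚ) < (m:ℚ) - t := by linarith
    have hx11 : (11:ℚ) ≤ (m:ℚ) - t := by linarith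
    have hprodnn : 0 ≤ ∏ k ∈ Finset.range t, (((m:ℚ) - k - 10)/((m:ℚ) - k)) := by
      apply Finset.prod_nonneg
      intro k hk
      have hk2 := Finset.mem_range.mp hk
      have hk' : (k:ℚ) ≤ t := by exact_mod_cast (show k ≤ t by omega)
      apply div_nonneg <;> linarith
    have hfactnn : (0:ℚ) ≤ ((m:ℚ) - t - 10)/((m:ℚ) - t) := by
      apply div_nonneg <;> linarith
    have hbern : ((m:ℚ) - t - 10)/((m:ℚ) - t) ≤ (((m:ℚ) - t - 1)/((m:ℚ) - t))^10 := by
      have h2 : (-2:ℚ) ≤ -(1/((m:ℚ) - t)) := by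
        have : 1/((m:ℚ) - t) ≤ 1 := by
          rw [div_le_one hx]; linarith
        linarith
      have hb := one_add_mul_le_pow h2 10
      norm_num at hb
      have e1 : ((m:ℚ) - t - 10)/((m:ℚ) - t) = 1 - 10 * ((m:ℚ) - t)⁻¹ := by
        rw [eq_sub_iff_add_eq, div_add' _ _ _ hx.ne', div_eq_iff hx.ne']
        field_simp; ring
      have e2 : ((m:ℚ) - t - 1)/((m:ℚ) - t) = 1 + -((m:ℚ) - t)⁻¹ := by
        rw [← sub_eq_add_neg, eq_sub_iff_add_eq, div_add' _ _ _ hx.ne', div_eq_iff hx.ne']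
        field_simp; ring
      rw [e1, e2]
      linarith
    have hApos : (0:ℚ) ≤ (((m:ℚ) - t)/(m:ℚ))^10 := by positivity
    calc ∏ k ∈ Finset.range (t+1), (((m:ℚ) - k - 10)/((m:ℚ) - k))
        = (∏ k ∈ Finset.range t, (((m:ℚ) - k - 10)/((m:ℚ) - k))) * (((m:ℚ) - t - 10)/((m:ℚ) - t)) := by
          rw [Finset.prod_range_succ]
      _ ≤ (((m:ℚ) - t)/(m:ℚ))^10 * ((((m:ℚ) - t - 1)/((m:ℚ) - t))^10) := by
          exact mul_le_mul (ih m (by omega)) hbern hfactnn hApos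
      _ = ((((m:ℚ) - t)/(m:ℚ)) * (((m:ℚ) - t - 1)/((m:ℚ) - t)))^10 := by
          rw [mul_pow]
      _ = (((m:ℚ) - (t+1))/(m:ℚ))^10 := by
          congr 1
          field_simp
          ring
      _ = (((m:ℚ) - ((t+1:ℕ):ℚ))/(m:ℚ))^10 := by push_cast; ring_nf

lemma T_large (m u : ℕ) (hm : 62 ≤ m) (hu : u ≤ m) : 3 * T m u + 2 ≤ m := by
  set t := (m+3)/4 with ht
  have h4a : 4 * t ≤ m + 3 := by omega
  have h4b : m ≤ 4 * t := by omega
  have htm : t + 10 < m := by omega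
  have hiter := T_iter t m u (m:ℚ) (by exact_mod_cast hu) htm
  have hprod := prod_le t m htm
  have hm0 : (0:ℚ) < m := by exact_mod_cast (show 0 < m by omega)
  have hfr : ((m:ℚ) - t)/(m:ℚ) ≤ 3/4 := by
    rw [div_le_iff₀ hm0]
    have : (m:ℚ) ≤ (4:ℚ) * t := by exact_mod_cast h4b
    linarith
  have hfrnn : (0:ℚ) ≤ ((m:ℚ) - t)/(m:ℚ) := by
    apply div_nonneg
    · have : (t:ℚ) ≤ m := by exact_mod_cast (show t ≤ m by omega)
      linarith
    · linarith
  have hpow : (((m:ℚ) - t)/(m:ℚ))^10 ≤ (3/4:ℚ)^10 :=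
    pow_le_pow_left₀ hfrnn hfr 10
  have hTq : (T m u : ℚ) ≤ t + (m:ℚ) * (3/4:ℚ)^10 := by
    have h1 : (m:ℚ) * (((m:ℚ) - t)/(m:ℚ))^10 ≤ (m:ℚ) * (3/4:ℚ)^10 :=
      mul_le_mul_of_nonneg_left hpow (by linarith)
    have h2 : (m:ℚ) * (∏ k ∈ Finset.range t, (((m:ℚ) - k - 10)/((m:ℚ) - k)))
        ≤ (m:ℚ) * (((m:ℚ) - t)/(m:ℚ))^10 :=
      mul_le_mul_of_nonneg_left hprod (by linarith)
    linarith
  have htq : (t:ℚ) ≤ ((m:ℚ) + 3)/4 := by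
    have : (4:ℚ) * t ≤ (m:ℚ) + 3 := by exact_mod_cast h4a
    linarith
  have hmq : (62:ℚ) ≤ m := by exact_mod_cast hm
  have final : 3 * (T m u : ℚ) + 2 ≤ m := by
    have hc : ((3:ℚ)/4)^10 = 59049/1048576 := by norm_num
    rw [hc] at hTq
    linarith
  exact_mod_cast final

set_option maxRecDepth 10000 in
lemma T_small : ∀ m < 62, ∀ u < 62, 10 ≤ m → u ≤ m → 3 * T m u + 2 ≤ m := by decide

lemma T_bound (m u : ℕ) (hm : 10 ≤ m) (hu : u ≤ m) : 3 * T m u + 2 ≤ m := by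
  rcases Nat.lt_or_ge m 62 with h | h
  · exact T_small m h u (by omega) hm hu
  · exact T_large m u h hu

lemma cover_exists {V : Type*} [DecidableEq V] (Nb : V → Finset V) :
    ∀ (m : ℕ) (A W : Finset V), A.card = m →
    (∀ w ∈ W, w ∈ Nb w ∧ Nb w ⊆ A ∧ 10 ≤ (Nb w).card) →
    ∃ D : Finset V, D ⊆ A ∧ (∀ w ∈ W, ∃ d ∈ D, d ∈ Nb w) ∧ D.card ≤ T m W.card := by
  intro m
  induction m with
  | zero =>
    intro A W hA hW
    rcases Finset.eq_empty_or_nonempty W with rfl | ⟨w₀, hw₀⟩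
    · exact ⟨∅, Finset.empty_subset _, by simp, by simp [T_zero]⟩
    · exfalso
      have h1 : 10 ≤ (Nb w₀).card := (hW w₀ hw₀).2.2
      have h2 : (Nb w₀).card ≤ A.card := Finset.card_le_card (hW w₀ hw₀).2.1
      omega
  | succ m ih =>
    intro A W hA hW
    rcases Finset.eq_empty_or_nonempty W with rfl | ⟨w₀, hw₀⟩
    · exact ⟨∅, Finset.empty_subset _, by simp, by simp [T_zero]⟩
    have hu0 : W.card ≠ 0 := Finset.card_ne_zero_of_mem hw₀
    show ∃ D : Finset V, D ⊆ A ∧ (∀ w ∈ W, ∃ d ∈ D, d ∈ Nb w) ∧ D.card ≤ T (m+1) W.card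
    rw [show T (m+1) W.card = if W.card = 0 then 0 else
        min W.card (if m+1 ≤ 10 then 1 else 1 + T m (W.card - (10*W.card + m) / (m+1))) from rfl,
      if_neg hu0]
    set X := (if m+1 ≤ 10 then 1 else 1 + T m (W.card - (10*W.card + m) / (m+1))) with hX
    rcases le_total W.card X with hmin | hmin
    · rw [min_eq_left hmin]
      refine ⟨W, ?_, ?_, le_rfl⟩
      · intro w hw; exact (hW w hw).2.1 ((hW w hw).1)
      · intro w hw; exact ⟨w, hw, (hW w hw).1⟩
    · rw [min_eq_right hmin]
      by_cases hm10 : m + 1 ≤ 10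
      · rw [hX, if_pos hm10]
        have hANb : ∀ w ∈ W, Nb w = A := by
          intro w hw
          apply Finset.eq_of_subset_of_card_le (hW w hw).2.1
          have := (hW w hw).2.2
          omega
        have hAne : A.Nonempty := by
          rw [← Finset.card_pos, hA]; omega
        obtain ⟨a, ha⟩ := hAne
        refine ⟨{a}, by simpa using ha, ?_, by simp⟩
        intro w hw
        exact ⟨a, Finset.mem_singleton_self a, by rw [hANb w hw]; exact ha⟩
      · rw [hX, if_neg hm10]
        set u := W.card with hu
        set c := (10*u + m) / (m+1) with hc
        have hsum : 10 * u ≤ ∑ a ∈ A, (W.filter (fun w => a ∈ Nb w)).card := by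
          have h1 : ∑ a ∈ A, (W.filter (fun w => a ∈ Nb w)).card
              = ∑ w ∈ W, (A.filter (fun a => a ∈ Nb w)).card := by
            simp only [Finset.card_filter]
            rw [Finset.sum_comm]
          rw [h1]
          have h2 : ∀ w ∈ W, 10 ≤ (A.filter (fun a => a ∈ Nb w)).card := by
            intro w hw
            have heq : A.filter (fun a => a ∈ Nb w) = Nb w := by
              apply Finset.Subset.antisymm
              · intro x hx; exact (Finset.mem_filter.mp hx).2
              · intro x hx; exact Finset.mem_filter.mpr ⟨(hW w hw).2.1 hx, hx⟩
            rw [heq]; exact (hW w hw).2.2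
          calc 10 * u = ∑ _w ∈ W, 10 := by rw [Finset.sum_const, smul_eq_mul, hu, mul_comm]
            _ ≤ ∑ w ∈ W, (A.filter (fun a => a ∈ Nb w)).card := Finset.sum_le_sum h2
        have hex : ∃ a ∈ A, c ≤ (W.filter (fun w => a ∈ Nb w)).card := by
          by_contra hno
          push_neg at hno
          have hb : ∀ a ∈ A, (W.filter (fun w => a ∈ Nb w)).card ≤ c - 1 := by
            intro a ha
            have := hno a ha
            omega
          have hs2 : ∑ a ∈ A, (W.filter (fun w => a ∈ Nb w)).card ≤ (m+1) * (c-1) := by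
            calc ∑ a ∈ A, (W.filter (fun w => a ∈ Nb w)).card ≤ ∑ _a ∈ A, (c-1) :=
                  Finset.sum_le_sum hb
              _ = (m+1) * (c-1) := by rw [Finset.sum_const, smul_eq_mul, hA]
          have hc1 : 1 ≤ c := by
            rw [hc]
            rw [Nat.le_div_iff_mul_le (by omega)]
            omega
          have hcu : (m+1) * c ≤ 10*u + m := by
            rw [Nat.mul_comm, hc]
            exact Nat.div_mul_le_self _ _
          have hcexp : (m+1) * c = (m+1)*(c-1) + (m+1) := by
            conv_lhs => rw [← Nat.succ_pred_eq_of_pos hc1]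
            rw [Nat.mul_succ]
            simp [Nat.pred_eq_sub_one]
          omega
        obtain ⟨a, haA, hfa⟩ := hex
        set W' := W.filter (fun w => a ∉ Nb w) with hW'
        have hW'card : W'.card ≤ u - c := by
          have hsplit := Finset.card_filter_add_card_filter_not (s := W)
            (p := fun w => a ∈ Nb w)
          have hW'eq : (Finset.filter (fun w => ¬ a ∈ Nb w) W).card = W'.card := by
            rw [hW']
          omega
        have hA' : (A.erase a).card = m := by
          rw [Finset.card_erase_of_mem haA, hA]
          omega
        have hWh' : ∀ w ∈ W', w ∈ Nb w ∧ Nb w ⊆ A.erase a ∧ 10 ≤ (Nb w).card := by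
          intro w hw
          obtain ⟨hwW, hwa⟩ := Finset.mem_filter.mp hw
          refine ⟨(hW w hwW).1, ?_, (hW w hwW).2.2⟩
          intro x hx
          refine Finset.mem_erase.mpr ⟨?_, (hW w hwW).2.1 hx⟩
          rintro rfl; exact hwa hx
        obtain ⟨D', hD'sub, hD'cov, hD'card⟩ := ih (A.erase a) W' hA' hWh'
        refine ⟨insert a D', ?_, ?_, ?_⟩
        · intro x hx
          rcases Finset.mem_insert.mp hx with rfl | hx'
          · exact haA
          · exact (Finset.erase_subset _ _) (hD'sub hx')
        · intro w hw
          by_cases hanb : a ∈ Nb w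
          · exact ⟨a, Finset.mem_insert_self a D', hanb⟩
          · obtain ⟨d, hd, hdnb⟩ := hD'cov w (Finset.mem_filter.mpr ⟨hw, hanb⟩)
            exact ⟨d, Finset.mem_insert_of_mem hd, hdnb⟩
        · calc (insert a D').card ≤ D'.card + 1 := Finset.card_insert_le a D'
            _ ≤ T m (u - c) + 1 :=
                Nat.add_le_add_right (le_trans hD'card (T_mono m hW'card)) 1
            _ = 1 + T m (u - c) := by omega



/-- `S` is a dominating set of `G`: every vertex is in `S` or has a neighbour in `S`. -/
def IsDomSet {V : Type*} (G : SimpleGraph V) (S : Finset V) : Prop :=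
  ∀ v : V, v ∈ S ∨ ∃ u ∈ S, G.Adj u v

/-- `S` is tropical w.r.t. the colouring `col`: every colour appears on a vertex of `S`. -/
def IsTropical {V C : Type*} (col : V → C) (S : Finset V) : Prop :=
  ∀ ch : C, ∃ v ∈ S, col v = ch

/-- The tropical domination number: the least size of a tropical dominating set. -/
noncomputable def tropDomNum {V C : Type*} (G : SimpleGraph V) (col : V → C) : ℕ :=
  sInf {k : ℕ | ∃ S : Finset V, IsDomSet G S ∧ IsTropical col S ∧ S.card = k}

/-- for a connected vertex-coloured graph with minimum degree `δ ≥ 9`,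
either `γᵗ(G^c) = c` or `γᵗ(G^c) < δ·(n - c + 1)/(3δ - 1) + c - 1`. -/
theorem tropDomNum_lt_of_minDegree_ge_nine
    {V C : Type*} [Fintype V] [Fintype C] (G : SimpleGraph V) [DecidableRel G.Adj]
    (hconn : G.Connected)
    (col : V → C) (hsurj : Function.Surjective col)
    (n c : ℕ) (hn : Fintype.card V = n) (hc : Fintype.card C = c)
    (hδ : 9 ≤ G.minDegree) :
    tropDomNum G col = c ∨
      (tropDomNum G col : ℝ) <
        (G.minDegree : ℝ) * ((n : ℝ) - (c : ℝ) + 1) / (3 * (G.minDegree : ℝ) - 1)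
          + (c : ℝ) - 1 := by
  classical
  obtain ⟨g, hg⟩ := hsurj.hasRightInverse
  have hginj : Function.Injective g := Function.RightInverse.injective hg
  set R : Finset V := Finset.univ.image g with hR
  have hRcard : R.card = c := by
    rw [hR, Finset.card_image_of_injective _ hginj, Finset.card_univ, hc]
  have htrop : IsTropical col R := by
    intro ch
    exact ⟨g ch, Finset.mem_image_of_mem g (Finset.mem_univ ch), hg ch⟩
  have hcn : c ≤ n := by
    rw [← hRcard, ← hn, ← Finset.card_univ]
    exact Finset.card_le_card (Finset.subset_univ R)
  set W : Finset V := Finset.univ.filter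
    (fun v => ¬ (v ∈ R ∨ ∃ r ∈ R, G.Adj r v)) with hWdef
  set A : Finset V := Finset.univ \ R with hAdef
  have hAcard : A.card = n - c := by
    rw [hAdef, Finset.card_sdiff_of_subset (Finset.subset_univ R), Finset.card_univ, hn, hRcard]
  -- the set defining tropDomNum is nonempty
  have hset_ne : {k : ℕ | ∃ S : Finset V, IsDomSet G S ∧ IsTropical col S ∧ S.card = k}.Nonempty := by
    refine ⟨(Finset.univ : Finset V).card, (Finset.univ : Finset V), ?_, ?_, rfl⟩
    · intro v; exact Or.inl (Finset.mem_univ v)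
    · intro ch; obtain ⟨v, hv⟩ := hsurj ch; exact ⟨v, Finset.mem_univ v, hv⟩
  have hlower : c ≤ tropDomNum G col := by
    obtain ⟨S, _, hStrop, hScard⟩ := Nat.sInf_mem hset_ne
    have heq : tropDomNum G col = sInf {k : ℕ | ∃ S : Finset V,
        IsDomSet G S ∧ IsTropical col S ∧ S.card = k} := rfl
    rw [heq, ← hScard]
    calc c = (Finset.univ : Finset C).card := by rw [Finset.card_univ, hc]
      _ ≤ (S.image col).card := by
          apply Finset.card_le_card
          intro ch _
          obtain ⟨v, hv, hvc⟩ := hStrop ch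
          exact Finset.mem_image.mpr ⟨v, hv, hvc⟩
      _ ≤ S.card := Finset.card_image_le
  rcases Finset.eq_empty_or_nonempty W with hWe | ⟨w₀, hw₀⟩
  · -- R itself dominates: tropDomNum = c
    left
    have hdom : IsDomSet G R := by
      intro v
      by_contra hv
      have : v ∈ W := by
        rw [hWdef, Finset.mem_filter]
        exact ⟨Finset.mem_univ v, by push_neg at hv ⊢; exact ⟨hv.1, fun r hr => hv.2 r hr⟩⟩
      rw [hWe] at this
      exact absurd this (Finset.notMem_empty v)
    have hupper : tropDomNum G col ≤ c := Nat.sInf_le ⟨R, hdom, htrop, hRcard⟩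
    omega
  · -- greedy covering of the undominated vertices
    right
    set Nb : V → Finset V := fun v => insert v (G.neighborFinset v) with hNb
    have hWh : ∀ w ∈ W, w ∈ Nb w ∧ Nb w ⊆ A ∧ 10 ≤ (Nb w).card := by
      intro w hw
      have hwprop : ¬ (w ∈ R ∨ ∃ r ∈ R, G.Adj r w) := (Finset.mem_filter.mp hw).2
      push_neg at hwprop
      refine ⟨Finset.mem_insert_self w _, ?_, ?_⟩
      · intro x hx
        rw [hAdef, Finset.mem_sdiff]
        refine ⟨Finset.mem_univ x, ?_⟩
        rcases Finset.mem_insert.mp hx with rfl | hx'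
        · exact hwprop.1
        · intro hxR
          exact hwprop.2 x hxR ((SimpleGraph.mem_neighborFinset G w x).mp hx').symm
      · have hwn : w ∉ G.neighborFinset w := by
          rw [SimpleGraph.mem_neighborFinset]
          exact G.irrefl
        rw [hNb]
        rw [Finset.card_insert_of_notMem hwn, SimpleGraph.card_neighborFinset_eq_degree]
        have := G.minDegree_le_degree w
        omega
    obtain ⟨D, hDA, hDcov, hDcard⟩ := cover_exists Nb A.card A W rfl hWh
    have hWA : W ⊆ A := fun w hw => ((hWh w hw).2.1 ((hWh w hw).1))
    have hm10 : 10 ≤ A.card :=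
      le_trans (hWh w₀ hw₀).2.2 (Finset.card_le_card (hWh w₀ hw₀).2.1)
    have hnum : 3 * T A.card W.card + 2 ≤ A.card :=
      T_bound A.card W.card hm10 (Finset.card_le_card hWA)
    have hK : 3 * D.card + 2 ≤ n - c := by
      rw [← hAcard]
      omega
    -- S = R ∪ D is a tropical dominating set
    set S : Finset V := R ∪ D with hS
    have hSdom : IsDomSet G S := by
      intro v
      by_cases hv : v ∈ R ∨ ∃ r ∈ R, G.Adj r v
      · rcases hv with hv | ⟨r, hr, hadj⟩
        · exact Or.inl (Finset.mem_union_left D hv)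
        · exact Or.inr ⟨r, Finset.mem_union_left D hr, hadj⟩
      · have hvW : v ∈ W := by
          rw [hWdef, Finset.mem_filter]; exact ⟨Finset.mem_univ v, hv⟩
        obtain ⟨d, hd, hdnb⟩ := hDcov v hvW
        rcases Finset.mem_insert.mp hdnb with rfl | hd'
        · exact Or.inl (Finset.mem_union_right R hd)
        · exact Or.inr ⟨d, Finset.mem_union_right R hd,
            ((SimpleGraph.mem_neighborFinset G v d).mp hd').symm⟩
    have hStrop : IsTropical col S := by
      intro ch
      obtain ⟨v, hv, hvc⟩ := htrop ch
      exact ⟨v, Finset.mem_union_left D hv, hvc⟩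
    have hmem : S.card ∈ {k : ℕ | ∃ S' : Finset V,
        IsDomSet G S' ∧ IsTropical col S' ∧ S'.card = k} := ⟨S, hSdom, hStrop, rfl⟩
    have hupper : tropDomNum G col ≤ c + D.card := by
      have h0 : tropDomNum G col ≤ S.card := Nat.sInf_le hmem
      apply le_trans h0
      calc S.card ≤ R.card + D.card := Finset.card_union_le R D
        _ = c + D.card := by rw [hRcard]
    -- final real arithmetic
    have hd9 : (9:ℝ) ≤ (G.minDegree : ℝ) := by exact_mod_cast hδ
    set dd : ℝ := (G.minDegree : ℝ) with hdd
    have hKr : 3 * (D.card : ℝ) + 2 ≤ (n:ℝ) - c := by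
      have h1 : ((3 * D.card + 2 : ℕ) : ℝ) ≤ ((n - c : ℕ) : ℝ) := by exact_mod_cast hK
      rw [Nat.cast_sub hcn] at h1
      push_cast at h1
      linarith
    have hγ : (tropDomNum G col : ℝ) ≤ (c:ℝ) + D.card := by exact_mod_cast hupper
    have hM1 : (0:ℝ) < (n:ℝ) - c + 1 := by linarith [Nat.cast_nonneg (α := ℝ) D.card]
    have hkey : ((n:ℝ) - c + 1)/3 < dd * ((n:ℝ) - c + 1) / (3 * dd - 1) := by
      rw [div_lt_div_iff₀ (by norm_num) (by linarith)]
      nlinarith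
    have : (D.card : ℝ) + 1 ≤ ((n:ℝ) - c + 1)/3 := by linarith
    linarith
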